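/- Let Z be a real n×n matrix that is tridiagonal (Z_{ij} = 0 whenever |i−j| > 1) with nonnegative off-diagonal entries (Z_{ij} ≥ 0 for i ≠ j). Then for every t ≥ 0: (1) the matrix exponential exp(tZ) is totally nonnegative; and (2) exp(t·D(Z)) = Comp(exp(tZ)), where D(Z) and Comp are the subset-indexed matrices defined in the context. -/

import Mathlib

noncomputable section

/-- The minor `det B[J, I]` of a square real matrix `B` with row set `J` and column set `I`
(rows and columns taken in increasing order); `0` if `J` and `I` have different sizes. -/
def minorJI {n : ℕ} (B : Matrix (Fin n) (Fin n) ℝ) (J I : Finset (Fin n)) : ℝ :=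
  if h : J.card = I.card then
    Matrix.det (Matrix.of fun a b : Fin I.card =>
      B ((J.orderIsoOfFin h) a) ((I.orderIsoOfFin rfl) b))
  else 0

/-- A real square matrix is totally nonnegative if all of its minors are nonnegative. -/
def TotallyNonneg {n : ℕ} (B : Matrix (Fin n) (Fin n) ℝ) : Prop :=
  ∀ J I : Finset (Fin n), J.card = I.card → 0 ≤ minorJI B J I

/-- The compound matrix `Comp(B)`, indexed by subsets of `[n]`, with entries
`Comp(B)_{J,I} = det B[J,I]` when `|J| = |I|` and `0` otherwise; this is the matrix of the
operator `B_#` in the basis of multiaffine monomials. -/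
def Comp {n : ℕ} (B : Matrix (Fin n) (Fin n) ℝ) :
    Matrix (Finset (Fin n)) (Finset (Fin n)) ℝ :=
  fun J I => minorJI B J I

/-- The matrix `D(Z)` of the infinitesimal operator `δ_Z`, indexed by subsets of `[n]`:
`D(Z)_{I,I} = ∑_{j ∈ I} Z_{jj}`; `D(Z)_{J,I} = Z_{ij}` when `J = (I ∖ {j}) ∪ {i}` for some
`j ∈ I`, `i ∉ I` (equivalently `I ∖ J = {j}` and `J ∖ I = {i}`); and `0` otherwise. -/
def DZ {n : ℕ} (Z : Matrix (Fin n) (Fin n) ℝ) :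
    Matrix (Finset (Fin n)) (Finset (Fin n)) ℝ :=
  fun J I =>
    if J = I then ∑ j ∈ I, Z j j
    else if (I \ J).card = 1 ∧ (J \ I).card = 1 then
      ∑ j ∈ I \ J, ∑ i ∈ J \ I, Z i j
    else 0

namespace ExpTNAux

open Matrix NormedSpace

/-- The determinant as a continuous multilinear map in the rows. -/
def detCML (r : ℕ) : ContinuousMultilinearMap ℝ (fun _ : Fin r => (Fin r → ℝ)) ℝ :=
  MultilinearMap.mkContinuous
    ((Matrix.detRowAlternating : ((Fin r → ℝ) [⋀^Fin r]→ₗ[ℝ] ℝ)).toMultilinearMap)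
    ((Nat.factorial r : ℝ)) (by
      intro v
      show ‖Matrix.detRowAlternating (Matrix.of v)‖ ≤ _
      rw [show Matrix.detRowAlternating (Matrix.of v) = Matrix.det (Matrix.of v) from rfl,
        Real.norm_eq_abs, Matrix.det_apply]
      calc |∑ σ : Equiv.Perm (Fin r), Equiv.Perm.sign σ • ∏ i, Matrix.of v (σ i) i|
          ≤ ∑ σ : Equiv.Perm (Fin r), |Equiv.Perm.sign σ • ∏ i, Matrix.of v (σ i) i| :=
            Finset.abs_sum_le_sum_abs _ _
        _ ≤ ∑ _σ : Equiv.Perm (Fin r), ∏ i, ‖v i‖ := by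
            refine Finset.sum_le_sum fun σ _ => ?_
            have h1 : |Equiv.Perm.sign σ • ∏ i, Matrix.of v (σ i) i|
                = |∏ i, v (σ i) i| := by
              rcases Int.units_eq_one_or (Equiv.Perm.sign σ) with h | h <;>
                simp [h, Units.smul_def, abs_neg, Matrix.of_apply]
            rw [h1, Finset.abs_prod]
            calc ∏ i, |v (σ i) i| ≤ ∏ i, ‖v (σ i)‖ :=
                  Finset.prod_le_prod (fun _ _ => abs_nonneg _)
                    (fun i _ => by simpa using norm_le_pi_norm (v (σ i)) i)
              _ = ∏ i, ‖v i‖ := Equiv.prod_comp σ fun a => ‖v a‖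
        _ = ((Nat.factorial r : ℝ)) * ∏ i, ‖v i‖ := by
            rw [Finset.sum_const, nsmul_eq_mul]
            congr 2
            simp [Fintype.card_perm])

lemma detCML_apply {r : ℕ} (v : Fin r → (Fin r → ℝ)) :
    detCML r v = Matrix.det (Matrix.of v) := by
  simp only [detCML, MultilinearMap.coe_mkContinuous]
  rfl

theorem hasDerivAt_det {r : ℕ} (M : ℝ → Fin r → Fin r → ℝ) (M' : Fin r → Fin r → ℝ) (t : ℝ)
    (h : ∀ a b, HasDerivAt (fun s => M s a b) (M' a b) t) :
    HasDerivAt (fun s => Matrix.det (Matrix.of (M s)))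
      (∑ a, Matrix.det ((Matrix.of (M t)).updateRow a (M' a))) t := by
  have hM : HasDerivAt M M' t := hasDerivAt_pi.2 fun a => hasDerivAt_pi.2 (h a)
  have hd := ((detCML r).hasFDerivAt (M t)).comp_hasDerivAt t hM
  have hval : (detCML r).linearDeriv (M t) M'
      = ∑ a, Matrix.det ((Matrix.of (M t)).updateRow a (M' a)) := by
    rw [ContinuousMultilinearMap.linearDeriv_apply]
    refine Finset.sum_congr rfl fun a _ => ?_
    exact detCML_apply _
  rw [hval] at hd
  have hfun : (⇑(detCML r) ∘ M) = fun s => Matrix.det (Matrix.of (M s)) := by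
    funext s
    exact detCML_apply _
  rw [hfun] at hd
  exact hd


section Linfty

variable {ι : Type*} [Fintype ι] [DecidableEq ι]

/-- The entry-evaluation linear map. -/
def entryLM (i j : ι) : Matrix ι ι ℝ →ₗ[ℝ] ℝ where
  toFun M := M i j
  map_add' _ _ := rfl
  map_smul' _ _ := rfl

theorem hasDerivAt_exp_entry (A : Matrix ι ι ℝ) (t : ℝ) (i j : ι) :
    HasDerivAt (fun s : ℝ => exp (s • A) i j) ((A * exp (t • A)) i j) t := by
  letI : SeminormedRing (Matrix ι ι ℝ) := Matrix.linftyOpSemiNormedRing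
  letI : NormedRing (Matrix ι ι ℝ) := Matrix.linftyOpNormedRing
  letI : NormedAlgebra ℝ (Matrix ι ι ℝ) := Matrix.linftyOpNormedAlgebra
  have h := hasDerivAt_exp_smul_const' (𝕂 := ℝ) A t
  have hL := ((LinearMap.toContinuousLinearMap (entryLM i j)).hasFDerivAt
    (x := exp (t • A))).comp_hasDerivAt t h
  exact hL

theorem exp_entry_commute (A : Matrix ι ι ℝ) (s : ℝ) :
    A * exp (s • A) = exp (s • A) * A := by
  letI : SeminormedRing (Matrix ι ι ℝ) := Matrix.linftyOpSemiNormedRing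
  letI : NormedRing (Matrix ι ι ℝ) := Matrix.linftyOpNormedRing
  letI : NormedAlgebra ℝ (Matrix ι ι ℝ) := Matrix.linftyOpNormedAlgebra
  exact ((Commute.refl A).smul_right s).exp_right

theorem exp_entry_nonneg (A : Matrix ι ι ℝ) (hA : ∀ i j, i ≠ j → 0 ≤ A i j)
    {t : ℝ} (ht : 0 ≤ t) (i j : ι) : 0 ≤ exp (t • A) i j := by
  letI : SeminormedRing (Matrix ι ι ℝ) := Matrix.linftyOpSemiNormedRing
  letI : NormedRing (Matrix ι ι ℝ) := Matrix.linftyOpNormedRing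
  letI : NormedAlgebra ℝ (Matrix ι ι ℝ) := Matrix.linftyOpNormedAlgebra
  set c : ℝ := ∑ k, |A k k| with hc
  have hcnn : ∀ k, |A k k| ≤ c :=
    fun k => Finset.single_le_sum (f := fun k => |A k k|)
      (fun _ _ => abs_nonneg _) (Finset.mem_univ k)
  set N : Matrix ι ι ℝ := A + c • 1 with hN
  have hNnn : ∀ i j, 0 ≤ N i j := by
    intro i j
    by_cases hij : i = j
    · subst hij
      have h1 : N i i = A i i + c := by simp [hN, Matrix.one_apply]
      rw [h1]
      have := hcnn i
      have := abs_le.mp (le_refl |A i i|) |>.1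
      linarith [neg_abs_le (A i i)]
    · have h1 : N i j = A i j := by simp [hN, Matrix.one_apply, hij]
      rw [h1]; exact hA i j hij
  -- entrywise nonneg powers
  have hpow : ∀ (B : Matrix ι ι ℝ), (∀ i j, 0 ≤ B i j) → ∀ (k : ℕ), ∀ i j, 0 ≤ (B ^ k) i j := by
    intro B hB k
    induction k with
    | zero => intro i j; rw [pow_zero]; by_cases hij : i = j <;>
        simp [Matrix.one_apply, hij]
    | succ k ih =>
        intro i j
        rw [pow_succ, Matrix.mul_apply]
        exact Finset.sum_nonneg fun m _ => mul_nonneg (ih i m) (hB m j)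
  -- exp of an entrywise nonneg matrix is entrywise nonneg
  have hexpN : ∀ (B : Matrix ι ι ℝ), (∀ i j, 0 ≤ B i j) → ∀ i j, 0 ≤ exp B i j := by
    intro B hB i j
    have hsum := expSeries_summable' (𝕂 := ℝ) (x := B)
    have hrw : exp B i j = ∑' k : ℕ, (((Nat.factorial k : ℝ))⁻¹ • B ^ k) i j := by
      have := (LinearMap.toContinuousLinearMap (entryLM i j)).map_tsum hsum
      rw [exp_eq_tsum ℝ]
      exact this
    rw [hrw]
    refine tsum_nonneg fun k => ?_
    have := hpow B hB k i j
    have h2 : (((Nat.factorial k : ℝ))⁻¹ • B ^ k) i j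
        = ((Nat.factorial k : ℝ))⁻¹ * (B ^ k) i j := rfl
    rw [h2]
    positivity
  -- decompose
  have hdec : t • A = t • N + (-(t * c)) • (1 : Matrix ι ι ℝ) := by
    rw [hN]
    rw [smul_add, smul_smul]
    abel_nf
    rw [← add_assoc]
    simp
  have hcomm : Commute (t • N) ((-(t * c)) • (1 : Matrix ι ι ℝ)) :=
    (((Commute.one_right N).smul_left t).smul_right (-(t * c)))
  have hsplit : exp (t • A) = exp (t • N) * exp ((-(t * c)) • (1 : Matrix ι ι ℝ)) := by
    rw [hdec, Matrix.exp_add_of_commute _ _ hcomm]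
  have hdiag : exp ((-(t * c)) • (1 : Matrix ι ι ℝ))
      = Matrix.diagonal (fun _ : ι => Real.exp (-(t * c))) := by
    have h1 : (-(t * c)) • (1 : Matrix ι ι ℝ)
        = Matrix.diagonal (fun _ : ι => (-(t * c) : ℝ)) := by
      ext x y
      by_cases hxy : x = y <;>
        simp [Matrix.smul_apply, Matrix.one_apply, Matrix.diagonal_apply, hxy]
    rw [h1, Matrix.exp_diagonal]
    congr 1
    funext k
    rw [Pi.exp_def]
    rw [Real.exp_eq_exp_ℝ]
  rw [hsplit, Matrix.mul_apply]
  refine Finset.sum_nonneg fun m _ => mul_nonneg ?_ ?_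
  · exact hexpN (t • N) (fun a b => by
      have h3 : (t • N) a b = t * N a b := rfl
      rw [h3]; exact mul_nonneg ht (hNnn a b)) i m
  · rw [hdiag]
    by_cases hmj : m = j
    · subst hmj
      rw [Matrix.diagonal_apply_eq]
      exact (Real.exp_pos _).le
    · rw [Matrix.diagonal_apply_ne _ hmj]

end Linfty

variable {n : ℕ}

lemma strictMono_update {r : ℕ} {f : Fin r → Fin n} (hf : StrictMono f) (a : Fin r)
    {m : Fin n} (hm : ∀ x, f x ≠ m)
    (hadj : (m : ℕ) = (f a : ℕ) + 1 ∨ (f a : ℕ) = (m : ℕ) + 1) :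
    StrictMono (Function.update f a m) := by
  intro x y hxy
  rcases eq_or_ne x a with hxa | hx
  · have hy : y ≠ a := fun hya => absurd hxy (by rw [hxa, hya]; exact lt_irrefl a)
    rw [hxa, Function.update_self, Function.update_of_ne hy]
    have h1 : (f a : ℕ) < (f y : ℕ) := hf (by rw [← hxa]; exact hxy)
    have h2 : (f y : ℕ) ≠ (m : ℕ) := fun hh => hm y (Fin.ext hh)
    rw [Fin.lt_def]
    omega
  · rw [Function.update_of_ne hx]
    rcases eq_or_ne y a with hya | hy
    · rw [hya, Function.update_self]
      have h1 : (f x : ℕ) < (f a : ℕ) := hf (by rw [← hya]; exact hxy)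
      have h2 : (f x : ℕ) ≠ (m : ℕ) := fun hh => hm x (Fin.ext hh)
      rw [Fin.lt_def]
      omega
    · rw [Function.update_of_ne hy]; exact hf hxy

lemma sdiff_insert_erase {J : Finset (Fin n)} {j m : Fin n} (hj : j ∈ J) (hm : m ∉ J) :
    J \ insert m (J.erase j) = {j} := by
  ext x
  simp only [Finset.mem_sdiff, Finset.mem_insert, Finset.mem_erase, Finset.mem_singleton]
  constructor
  · rintro ⟨hxJ, hx⟩
    by_contra hxj
    exact hx (Or.inr ⟨hxj, hxJ⟩)
  · rintro rfl
    refine ⟨hj, ?_⟩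
    rintro (rfl | ⟨hne, _⟩)
    · exact hm hj
    · exact hne rfl

lemma insert_erase_sdiff {J : Finset (Fin n)} {j m : Fin n} (hj : j ∈ J) (hm : m ∉ J) :
    insert m (J.erase j) \ J = {m} := by
  ext x
  simp only [Finset.mem_sdiff, Finset.mem_insert, Finset.mem_erase, Finset.mem_singleton]
  constructor
  · rintro ⟨(rfl | ⟨hxj, hxJ⟩), hxnJ⟩
    · rfl
    · exact absurd hxJ hxnJ
  · rintro rfl
    exact ⟨Or.inl rfl, hm⟩

lemma card_insert_erase {J : Finset (Fin n)} {j m : Fin n} (hj : j ∈ J) (hm : m ∉ J) :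
    (insert m (J.erase j)).card = J.card := by
  rw [Finset.card_insert_of_notMem (fun hh => hm (Finset.mem_of_mem_erase hh)),
    Finset.card_erase_of_mem hj]
  have : 0 < J.card := Finset.card_pos.mpr ⟨j, hj⟩
  omega

lemma DZ_insert_erase (Z : Matrix (Fin n) (Fin n) ℝ) {J : Finset (Fin n)} {j m : Fin n}
    (hj : j ∈ J) (hm : m ∉ J) :
    DZ Z J (insert m (J.erase j)) = Z j m := by
  have hKJ : J ≠ insert m (J.erase j) := fun hh => hm (by rw [hh]; exact Finset.mem_insert_self m _)
  simp only [DZ]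
  rw [if_neg hKJ, if_pos ⟨by rw [insert_erase_sdiff hj hm]; rfl,
    by rw [sdiff_insert_erase hj hm]; rfl⟩]
  rw [insert_erase_sdiff hj hm, sdiff_insert_erase hj hm]
  simp

lemma DZ_card_eq {Z : Matrix (Fin n) (Fin n) ℝ} {J K : Finset (Fin n)} (h : DZ Z J K ≠ 0) :
    J.card = K.card := by
  simp only [DZ] at h
  split_ifs at h with h1 h2
  · rw [h1]
  · obtain ⟨hK, hJ⟩ := h2
    have e1 := Finset.card_inter_add_card_sdiff J K
    have e2 := Finset.card_inter_add_card_sdiff K J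
    rw [Finset.inter_comm] at e2
    omega
  · exact absurd rfl h

lemma det_updateRow_sum'' {r : ℕ} (S : Matrix (Fin r) (Fin r) ℝ) (a : Fin r)
    {μ : Type*} (s : Finset μ) (c : μ → ℝ) (w : μ → (Fin r → ℝ)) :
    (S.updateRow a (∑ m ∈ s, c m • w m)).det = ∑ m ∈ s, c m * (S.updateRow a (w m)).det := by
  classical
  induction s using Finset.induction_on with
  | empty =>
      rw [Finset.sum_empty, Finset.sum_empty]
      exact Matrix.det_eq_zero_of_row_eq_zero a (fun b => by rw [Matrix.updateRow_self]; rfl)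
  | insert _ _ hx ih =>
      rw [Finset.sum_insert hx, Finset.sum_insert hx, Matrix.det_updateRow_add,
        Matrix.det_updateRow_smul, ih]

lemma sum_orderIso {J : Finset (Fin n)} {k : ℕ} (h : J.card = k) (φ : Fin n → ℝ) :
    ∑ a : Fin k, φ ((J.orderIsoOfFin h) a) = ∑ j ∈ J, φ j := by
  rw [← Finset.sum_coe_sort J φ]
  exact Fintype.sum_equiv (J.orderIsoOfFin h).toEquiv _ _ (fun a => rfl)

theorem jacobi (Z B : Matrix (Fin n) (Fin n) ℝ)
    (htri : ∀ i j : Fin n, 1 < |(i : ℤ) - (j : ℤ)| → Z i j = 0)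
    (J I : Finset (Fin n)) (h : J.card = I.card) :
    (∑ a : Fin I.card,
      ((Matrix.of fun a b : Fin I.card =>
          B ((J.orderIsoOfFin h) a) ((I.orderIsoOfFin rfl) b)).updateRow a
        (fun b => (Z * B) ((J.orderIsoOfFin h) a) ((I.orderIsoOfFin rfl) b))).det)
      = ∑ K : Finset (Fin n), DZ Z J K * minorJI B K I := by
  classical
  set fJ : Fin I.card → Fin n := fun a => ((J.orderIsoOfFin h) a : Fin n) with hfJdef
  set fI : Fin I.card → Fin n := fun b => ((I.orderIsoOfFin rfl) b : Fin n) with hfIdef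
  have hfJemb : fJ = ⇑(J.orderEmbOfFin h) :=
    funext fun a => Finset.coe_orderIsoOfFin_apply J h a
  have hfJmono : StrictMono fJ := hfJemb ▸ (J.orderEmbOfFin h).strictMono
  have hfJmem : ∀ a, fJ a ∈ J := fun a => (J.orderIsoOfFin h a).2
  have hfJinj : Function.Injective fJ := hfJmono.injective
  have hfJsurj : ∀ m ∈ J, ∃ a, fJ a = m := by
    intro m hm
    refine ⟨(J.orderIsoOfFin h).symm ⟨m, hm⟩, ?_⟩
    show ((J.orderIsoOfFin h) ((J.orderIsoOfFin h).symm ⟨m, hm⟩) : Fin n) = m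
    rw [OrderIso.apply_symm_apply]
  -- Step 1: expand each row update by multilinearity.
  have step1 : ∀ a : Fin I.card,
      ((Matrix.of fun a b : Fin I.card => B (fJ a) (fI b)).updateRow a
          (fun b => (Z * B) (fJ a) (fI b))).det
        = ∑ m : Fin n, Z (fJ a) m * (B.submatrix (Function.update fJ a m) fI).det := by
    intro a
    have hv : (fun b => (Z * B) (fJ a) (fI b))
        = ∑ m : Fin n, Z (fJ a) m • (fun b => B m (fI b)) := by
      funext b
      rw [Finset.sum_apply]
      simp [Matrix.mul_apply]
    rw [hv, det_updateRow_sum'']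
    refine Finset.sum_congr rfl fun m _ => ?_
    have hXY : ((Matrix.of fun a b : Fin I.card => B (fJ a) (fI b)).updateRow a
        (fun b => B m (fI b))) = B.submatrix (Function.update fJ a m) fI := by
      ext x b
      rcases eq_or_ne x a with rfl | hx
      · rw [Matrix.updateRow_self, Matrix.submatrix_apply, Function.update_self]
      · rw [Matrix.updateRow_ne hx, Matrix.submatrix_apply, Matrix.of_apply,
          Function.update_of_ne hx]
    rw [hXY]
  -- Step 2: evaluate the inner sum.
  have step2 : ∀ a : Fin I.card,
      (∑ m : Fin n, Z (fJ a) m * (B.submatrix (Function.update fJ a m) fI).det)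
        = Z (fJ a) (fJ a) * minorJI B J I
          + ∑ m ∈ Jᶜ, Z (fJ a) m * minorJI B (insert m (J.erase (fJ a))) I := by
    intro a
    rw [← Finset.sum_add_sum_compl J]
    congr 1
    · -- sum over J: only m = fJ a contributes
      rw [Finset.sum_eq_single_of_mem (fJ a) (hfJmem a)]
      · congr 1
        rw [Function.update_eq_self]
        rw [minorJI, dif_pos h]
        rfl
      · intro m hmJ hmne
        obtain ⟨a', ha'⟩ := hfJsurj m hmJ
        have haa : a ≠ a' := by
          rintro rfl
          exact hmne ha'.symm
        have hroweq : (B.submatrix (Function.update fJ a m) fI) a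
            = (B.submatrix (Function.update fJ a m) fI) a' := by
          funext b
          rw [Matrix.submatrix_apply, Matrix.submatrix_apply, Function.update_self,
            Function.update_of_ne (Ne.symm haa), ha']
        rw [Matrix.det_zero_of_row_eq haa hroweq, mul_zero]
    · -- sum over the complement
      refine Finset.sum_congr rfl fun m hm => ?_
      have hmJ : m ∉ J := Finset.mem_compl.mp hm
      by_cases hadj : ((m : ℕ) = (fJ a : ℕ) + 1 ∨ (fJ a : ℕ) = (m : ℕ) + 1)
      · congr 1
        have hKcard : (insert m (J.erase (fJ a))).card = I.card :=
          (card_insert_erase (hfJmem a) hmJ).trans h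
        have hmono : StrictMono (Function.update fJ a m) :=
          strictMono_update hfJmono a (fun x hx => hmJ (hx ▸ hfJmem x)) hadj
        have hrange : ∀ x, Function.update fJ a m x ∈ insert m (J.erase (fJ a)) := by
          intro x
          rcases eq_or_ne x a with rfl | hx
          · rw [Function.update_self]; exact Finset.mem_insert_self _ _
          · rw [Function.update_of_ne hx]
            exact Finset.mem_insert_of_mem
              (Finset.mem_erase.mpr ⟨fun hh => hx (hfJinj hh), hfJmem x⟩)
        have hupdate := Finset.orderEmbOfFin_unique hKcard hrange hmono
        rw [minorJI, dif_pos hKcard]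
        have : (Matrix.of fun x b : Fin I.card =>
            B (((insert m (J.erase (fJ a))).orderIsoOfFin hKcard) x) (fI b))
            = B.submatrix (Function.update fJ a m) fI := by
          ext x b
          rw [Matrix.of_apply, Matrix.submatrix_apply]
          congr 1
          rw [Finset.coe_orderIsoOfFin_apply, ← hupdate]
        rw [this]
      · have hZ : Z (fJ a) m = 0 := by
          apply htri
          push_neg at hadj
          rcases lt_trichotomy (m : ℕ) ((fJ a : ℕ)) with hlt | heq | hgt
          · rw [abs_of_pos (by push_cast; omega : (0:ℤ) < ((fJ a : ℕ) :ℤ) - ((m : ℕ) :ℤ))]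
            push_cast
            omega
          · exfalso
            exact hmJ (by rw [show m = fJ a from Fin.ext heq] at hmJ ⊢; exact hfJmem a)
          · rw [abs_of_neg (by push_cast; omega : ((fJ a : ℕ) :ℤ) - ((m : ℕ) :ℤ) < 0)]
            push_cast
            omega
        rw [hZ, zero_mul, zero_mul]
  -- Step 3: the right-hand side.
  have step3 : ∑ K : Finset (Fin n), DZ Z J K * minorJI B K I
      = (∑ j ∈ J, Z j j) * minorJI B J I
        + ∑ j ∈ J, ∑ m ∈ Jᶜ, Z j m * minorJI B (insert m (J.erase j)) I := by
    rw [← Finset.add_sum_erase _ _ (Finset.mem_univ J)]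
    congr 1
    · simp only [DZ, eq_self_iff_true, if_true]
    · set ψ : Fin n × Fin n → Finset (Fin n) := fun p => insert p.2 (J.erase p.1) with hψ
      have hsub : ((J ×ˢ Jᶜ).image ψ) ⊆ Finset.univ.erase J := by
        intro K hK
        obtain ⟨p, hp, rfl⟩ := Finset.mem_image.mp hK
        obtain ⟨hp1, hp2⟩ := Finset.mem_product.mp hp
        refine Finset.mem_erase.mpr ⟨?_, Finset.mem_univ _⟩
        intro hh
        exact (Finset.mem_compl.mp hp2) (by rw [← hh]; exact Finset.mem_insert_self _ _)
      have hvan : ∀ K ∈ Finset.univ.erase J, K ∉ (J ×ˢ Jᶜ).image ψ →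
          DZ Z J K * minorJI B K I = 0 := by
        intro K hK hKim
        have hKJ : K ≠ J := (Finset.mem_erase.mp hK).1
        have : DZ Z J K = 0 := by
          simp only [DZ]
          rw [if_neg (Ne.symm hKJ)]
          split_ifs with hcond
          · exfalso
            obtain ⟨h1, h2⟩ := hcond
            obtain ⟨m0, hm0⟩ := Finset.card_eq_one.mp h1
            obtain ⟨j0, hj0⟩ := Finset.card_eq_one.mp h2
            have hj0m : j0 ∈ J \ K := by rw [hj0]; exact Finset.mem_singleton_self j0
            have hm0m : m0 ∈ K \ J := by rw [hm0]; exact Finset.mem_singleton_self m0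
            obtain ⟨hj0J, hj0K⟩ := Finset.mem_sdiff.mp hj0m
            obtain ⟨hm0K, hm0J⟩ := Finset.mem_sdiff.mp hm0m
            apply hKim
            refine Finset.mem_image.mpr ⟨(j0, m0),
              Finset.mem_product.mpr ⟨hj0J, Finset.mem_compl.mpr hm0J⟩, ?_⟩
            -- ψ (j0, m0) = K
            ext x
            simp only [hψ, Finset.mem_insert, Finset.mem_erase]
            constructor
            · rintro (rfl | ⟨hxj, hxJ⟩)
              · exact hm0K
              · by_contra hxK
                have : x ∈ J \ K := Finset.mem_sdiff.mpr ⟨hxJ, hxK⟩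
                rw [hj0] at this
                exact hxj (Finset.mem_singleton.mp this)
            · intro hxK
              by_cases hxJ : x ∈ J
              · refine Or.inr ⟨?_, hxJ⟩
                rintro rfl
                exact hj0K hxK
              · have : x ∈ K \ J := Finset.mem_sdiff.mpr ⟨hxK, hxJ⟩
                rw [hm0] at this
                exact Or.inl (Finset.mem_singleton.mp this)
          · rfl
        rw [this, zero_mul]
      rw [← Finset.sum_subset hsub hvan]
      have hinj : ∀ p ∈ J ×ˢ Jᶜ, ∀ q ∈ J ×ˢ Jᶜ, ψ p = ψ q → p = q := by
        intro p hp q hq hpq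
        obtain ⟨hp1, hp2⟩ := Finset.mem_product.mp hp
        obtain ⟨hq1, hq2⟩ := Finset.mem_product.mp hq
        have e1 : J \ ψ p = {p.1} := sdiff_insert_erase hp1 (Finset.mem_compl.mp hp2)
        have e1' : J \ ψ q = {q.1} := sdiff_insert_erase hq1 (Finset.mem_compl.mp hq2)
        have e2 : ψ p \ J = {p.2} := insert_erase_sdiff hp1 (Finset.mem_compl.mp hp2)
        have e2' : ψ q \ J = {q.2} := insert_erase_sdiff hq1 (Finset.mem_compl.mp hq2)
        rw [hpq] at e1 e2
        have hfst : p.1 = q.1 := Finset.singleton_injective (e1'.symm.trans e1) |>.symm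
        have hsnd : p.2 = q.2 := Finset.singleton_injective (e2'.symm.trans e2) |>.symm
        exact Prod.ext hfst hsnd
      rw [Finset.sum_image hinj, Finset.sum_product]
      refine Finset.sum_congr rfl fun j hj => Finset.sum_congr rfl fun m hm => ?_
      rw [DZ_insert_erase Z hj (Finset.mem_compl.mp hm)]
  -- put the pieces together
  rw [step3]
  calc (∑ a : Fin I.card,
      ((Matrix.of fun a b : Fin I.card => B (fJ a) (fI b)).updateRow a
        (fun b => (Z * B) (fJ a) (fI b))).det)
      = ∑ a : Fin I.card, (Z (fJ a) (fJ a) * minorJI B J I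
          + ∑ m ∈ Jᶜ, Z (fJ a) m * minorJI B (insert m (J.erase (fJ a))) I) := by
        refine Finset.sum_congr rfl fun a _ => ?_
        rw [step1 a, step2 a]
    _ = (∑ j ∈ J, Z j j) * minorJI B J I
        + ∑ j ∈ J, ∑ m ∈ Jᶜ, Z j m * minorJI B (insert m (J.erase j)) I := by
        rw [Finset.sum_add_distrib]
        congr 1
        · rw [← Finset.sum_mul]
          congr 1
          exact sum_orderIso h (fun j => Z j j)
        · exact sum_orderIso h (fun j => ∑ m ∈ Jᶜ, Z j m * minorJI B (insert m (J.erase j)) I)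



lemma Comp_one {n : ℕ} : Comp (1 : Matrix (Fin n) (Fin n) ℝ) = 1 := by
  ext J I
  by_cases h : J = I
  · subst h
    rw [Matrix.one_apply_eq]
    show minorJI 1 J J = 1
    rw [minorJI, dif_pos rfl]
    have h1 : (Matrix.of fun a b : Fin J.card =>
        (1 : Matrix (Fin n) (Fin n) ℝ) ((J.orderIsoOfFin rfl) a) ((J.orderIsoOfFin rfl) b))
        = (1 : Matrix (Fin J.card) (Fin J.card) ℝ) := by
      ext a b
      rcases eq_or_ne a b with rfl | hab
      · rw [Matrix.of_apply, Matrix.one_apply_eq, Matrix.one_apply_eq]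
      · have hne : ((J.orderIsoOfFin rfl) a : Fin n) ≠ ((J.orderIsoOfFin rfl) b : Fin n) := by
          intro hh
          exact hab ((J.orderIsoOfFin rfl).injective (Subtype.ext hh))
        rw [Matrix.of_apply, Matrix.one_apply_ne hne, Matrix.one_apply_ne hab]
    rw [h1, Matrix.det_one]
  · rw [Matrix.one_apply_ne h]
    show minorJI 1 J I = 0
    rw [minorJI]
    split_ifs with hc
    · obtain ⟨i, hiJ, hiI⟩ : ∃ i, i ∈ J ∧ i ∉ I := by
        by_contra hno
        push_neg at hno
        exact h (Finset.eq_of_subset_of_card_le (fun x hx => hno x hx) (le_of_eq hc.symm))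
      set a := (J.orderIsoOfFin hc).symm ⟨i, hiJ⟩ with ha
      apply Matrix.det_eq_zero_of_row_eq_zero a
      intro b
      rw [Matrix.of_apply]
      apply Matrix.one_apply_ne
      intro hh
      apply hiI
      have h2 : ((J.orderIsoOfFin hc) a : Fin n) = i := by
        rw [ha, OrderIso.apply_symm_apply]
      rw [h2] at hh
      rw [hh]
      exact ((I.orderIsoOfFin rfl) b).2
    · rfl

end ExpTNAux

/-- For a tridiagonal real matrix `Z` with nonnegative off-diagonal entries and `t ≥ 0`,
the matrix exponential `exp(tZ)` is totally nonnegative, and `exp(t·D(Z)) = Comp(exp(tZ))`. -/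
theorem exp_tridiagonal_totallyNonneg_and_exp_DZ {n : ℕ} (Z : Matrix (Fin n) (Fin n) ℝ)
    (htri : ∀ i j : Fin n, 1 < |(i : ℤ) - (j : ℤ)| → Z i j = 0)
    (hoff : ∀ i j : Fin n, i ≠ j → 0 ≤ Z i j) (t : ℝ) (ht : 0 ≤ t) :
    TotallyNonneg (NormedSpace.exp (t • Z)) ∧
      NormedSpace.exp (t • DZ Z) = Comp (NormedSpace.exp (t • Z)) := by
  classical
  set D : Matrix (Finset (Fin n)) (Finset (Fin n)) ℝ := DZ Z with hD
  have main : ∀ s : ℝ, NormedSpace.exp (s • D) = Comp (NormedSpace.exp (s • Z)) := by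
    intro s
    -- entrywise derivative of F w := Comp (exp (w • Z))
    have hF : ∀ (u : ℝ) (J I : Finset (Fin n)),
        HasDerivAt (fun w => Comp (NormedSpace.exp (w • Z)) J I)
          ((D * Comp (NormedSpace.exp (u • Z))) J I) u := by
      intro u J I
      by_cases hc : J.card = I.card
      · have hfun : (fun w => Comp (NormedSpace.exp (w • Z)) J I)
            = fun w : ℝ => Matrix.det (Matrix.of fun a b : Fin I.card =>
                NormedSpace.exp (w • Z) ((J.orderIsoOfFin hc) a) ((I.orderIsoOfFin rfl) b)) := by
          funext w
          simp only [Comp, minorJI, dif_pos hc]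
        have hd := ExpTNAux.hasDerivAt_det
          (fun w a b => NormedSpace.exp (w • Z) ((J.orderIsoOfFin hc) a) ((I.orderIsoOfFin rfl) b))
          (fun a b => (Z * NormedSpace.exp (u • Z)) ((J.orderIsoOfFin hc) a) ((I.orderIsoOfFin rfl) b))
          u (fun a b => ExpTNAux.hasDerivAt_exp_entry Z u _ _)
        have hval : (∑ a : Fin I.card, Matrix.det
            ((Matrix.of fun a b : Fin I.card => NormedSpace.exp (u • Z)
                ((J.orderIsoOfFin hc) a) ((I.orderIsoOfFin rfl) b)).updateRow a
              (fun b => (Z * NormedSpace.exp (u • Z))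
                ((J.orderIsoOfFin hc) a) ((I.orderIsoOfFin rfl) b))))
            = (D * Comp (NormedSpace.exp (u • Z))) J I := by
          rw [ExpTNAux.jacobi Z (NormedSpace.exp (u • Z)) htri J I hc, Matrix.mul_apply]
          rfl
        rw [hfun, ← hval]
        exact hd
      · have hfun : (fun w : ℝ => Comp (NormedSpace.exp (w • Z)) J I) = fun _ => (0:ℝ) :=
          funext fun w => by simp only [Comp, minorJI, dif_neg hc]
        have hzero : (D * Comp (NormedSpace.exp (u • Z))) J I = 0 := by
          rw [Matrix.mul_apply]
          refine Finset.sum_eq_zero fun K _ => ?_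
          by_cases hDK : DZ Z J K = 0
          · show DZ Z J K * _ = 0
            rw [hDK, zero_mul]
          · have hJK := ExpTNAux.DZ_card_eq hDK
            have hCKI : Comp (NormedSpace.exp (u • Z)) K I = 0 := by
              simp only [Comp, minorJI, dif_neg (fun hh => hc (hJK.trans hh))]
            show DZ Z J K * Comp (NormedSpace.exp (u • Z)) K I = 0
            rw [hCKI, mul_zero]
        rw [hfun, hzero]
        exact hasDerivAt_const u 0
    -- G := exp (u • (-D)) * Comp (exp (u • Z)) is constant, equal to 1
    have hG : ∀ u : ℝ,
        NormedSpace.exp (u • (-D)) * Comp (NormedSpace.exp (u • Z)) = 1 := by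
      have hconst : ∀ (J I : Finset (Fin n)) (u : ℝ),
          (NormedSpace.exp (u • (-D)) * Comp (NormedSpace.exp (u • Z))) J I
            = (NormedSpace.exp ((0:ℝ) • (-D)) * Comp (NormedSpace.exp ((0:ℝ) • Z))) J I := by
        intro J I u
        set g : ℝ → ℝ := fun w => ∑ K : Finset (Fin n),
          NormedSpace.exp (w • (-D)) J K * Comp (NormedSpace.exp (w • Z)) K I with hg
        have hgd : ∀ w : ℝ, HasDerivAt g 0 w := by
          intro w
          have hterm : ∀ K : Finset (Fin n), HasDerivAt
              (fun x => NormedSpace.exp (x • (-D)) J K * Comp (NormedSpace.exp (x • Z)) K I)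
              (((-D) * NormedSpace.exp (w • (-D))) J K * Comp (NormedSpace.exp (w • Z)) K I
                + NormedSpace.exp (w • (-D)) J K
                  * ((D * Comp (NormedSpace.exp (w • Z))) K I)) w :=
            fun K => (ExpTNAux.hasDerivAt_exp_entry (-D) w J K).mul (hF w K I)
          have hsum := HasDerivAt.sum (u := (Finset.univ : Finset (Finset (Fin n)))) (fun K _ => hterm K)
          convert hsum using 1
          case e'_4 => rfl
          case e'_5 => rfl
          case e'_8 => funext x; rw [Finset.sum_apply]
          rw [Finset.sum_add_distrib]
          have e1 : ∑ K : Finset (Fin n), ((-D) * NormedSpace.exp (w • (-D))) J K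
                * Comp (NormedSpace.exp (w • Z)) K I
              = (((-D) * NormedSpace.exp (w • (-D))) * Comp (NormedSpace.exp (w • Z))) J I :=
            (Matrix.mul_apply).symm
          have e2 : ∑ K : Finset (Fin n), NormedSpace.exp (w • (-D)) J K
                * ((D * Comp (NormedSpace.exp (w • Z))) K I)
              = (NormedSpace.exp (w • (-D)) * (D * Comp (NormedSpace.exp (w • Z)))) J I :=
            (Matrix.mul_apply).symm
          rw [e1, e2]
          have hXF : ((-D) * NormedSpace.exp (w • (-D))) * Comp (NormedSpace.exp (w • Z))
              + NormedSpace.exp (w • (-D)) * (D * Comp (NormedSpace.exp (w • Z))) = 0 := by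
            rw [ExpTNAux.exp_entry_commute (-D) w, mul_neg, neg_mul, ← mul_assoc]
            exact neg_add_cancel _
          rw [← Matrix.add_apply, hXF, Matrix.zero_apply]
        have hgdiff : Differentiable ℝ g := fun w => (hgd w).differentiableAt
        have hcst := is_const_of_deriv_eq_zero hgdiff (fun w => (hgd w).deriv) u 0
        rw [Matrix.mul_apply, Matrix.mul_apply]
        exact hcst
      intro u
      have h0 : NormedSpace.exp ((0:ℝ) • (-D)) * Comp (NormedSpace.exp ((0:ℝ) • Z)) = 1 := by
        rw [zero_smul, zero_smul, NormedSpace.exp_zero, NormedSpace.exp_zero, ExpTNAux.Comp_one,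
          one_mul]
      ext J I
      rw [hconst J I u, h0]
    have h2 : NormedSpace.exp (s • D) * NormedSpace.exp (s • (-D)) = 1 := by
      have hcm : Commute (s • D) (s • (-D)) :=
        (((Commute.refl D).neg_right).smul_left s).smul_right s
      rw [← Matrix.exp_add_of_commute _ _ hcm, smul_neg, add_neg_cancel,
        NormedSpace.exp_zero]
    calc NormedSpace.exp (s • D)
        = NormedSpace.exp (s • D) * 1 := (mul_one _).symm
      _ = NormedSpace.exp (s • D)
          * (NormedSpace.exp (s • (-D)) * Comp (NormedSpace.exp (s • Z))) := by rw [hG s]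
      _ = (NormedSpace.exp (s • D) * NormedSpace.exp (s • (-D)))
          * Comp (NormedSpace.exp (s • Z)) := (mul_assoc _ _ _).symm
      _ = Comp (NormedSpace.exp (s • Z)) := by rw [h2, one_mul]
  have hoffD : ∀ P Q : Finset (Fin n), P ≠ Q → 0 ≤ DZ Z P Q := by
    intro P Q hPQ
    simp only [DZ]
    rw [if_neg hPQ]
    split_ifs with hcond
    · refine Finset.sum_nonneg fun q hq => Finset.sum_nonneg fun p hp => ?_
      have hp' := Finset.mem_sdiff.mp hp
      have hq' := Finset.mem_sdiff.mp hq
      exact hoff p q (fun hh => hp'.2 (hh ▸ hq'.1))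
    · exact le_refl 0
  refine ⟨?_, main t⟩
  intro J I hJI
  have hmE : minorJI (NormedSpace.exp (t • Z)) J I = NormedSpace.exp (t • D) J I := by
    have := congrFun (congrFun (main t) J) I
    exact this.symm
  rw [hmE]
  exact ExpTNAux.exp_entry_nonneg D hoffD ht J I
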